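/- arXiv:1905.01332 — 4 statements merged into one kernel-verified Lean document; each statement's English description precedes it below -/
import Mathlib

section
/- Let φ: ℝⁿ → ℝ be continuously differentiable with L-Lipschitz gradient, and let f: ℝⁿ → ℝ satisfy |f(x) - φ(x)| ≤ ε_f for all x. Let g(x) ∈ ℝⁿ be the forward finite difference approximation with components g(x)_i = (f(x + σ e_i) - f(x))/σ for σ > 0, where e_i are the standard basis vectors. Then ‖g(x) - ∇φ(x)‖ ≤ (√n · L · σ)/2 + (2√n · ε_f)/σ for all x. -/
theorem quad_bound {F : Type*} [NormedAddCommGroup F] [InnerProductSpace ℝ F]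
    [CompleteSpace F]
    (φ : F → ℝ) (hφ : ContDiff ℝ 1 φ) (L : ℝ) (hL : 0 ≤ L)
    (hlip : ∀ x y, ‖gradient φ x - gradient φ y‖ ≤ L * ‖x - y‖) (x v : F) :
    |φ (x + v) - φ x - inner ℝ (gradient φ x) v| ≤ L * ‖v‖ ^ 2 / 2 := by
  have hdiff := hφ.differentiable one_ne_zero
  set ψ' : ℝ → ℝ := fun t => inner ℝ (gradient φ (x + t • v)) v with hψ'
  have hderiv : ∀ t : ℝ, HasDerivAt (fun t : ℝ => φ (x + t • v)) (ψ' t) t := by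
    intro t
    have h1 : HasFDerivAt φ (InnerProductSpace.toDual ℝ F (gradient φ (x + t • v)))
        (x + t • v) := (hdiff _).hasGradientAt.hasFDerivAt
    have h2 : HasDerivAt (fun t : ℝ => x + t • v) v t :=
      by simpa using ((hasDerivAt_id t).smul_const v).const_add x
    have h3 := h1.comp_hasDerivAt t h2
    rw [InnerProductSpace.toDual_apply_apply] at h3
    exact h3
  have hcont : Continuous ψ' := by
    have : Continuous (gradient φ) := by
      have h := hφ.continuous_fderiv one_ne_zero
      exact (InnerProductSpace.toDual ℝ F).symm.continuous.comp h
    exact (this.comp (by continuity)).inner continuous_const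
  have hftc : ∫ t in (0:ℝ)..1, ψ' t = φ (x + v) - φ x := by
    have := intervalIntegral.integral_eq_sub_of_hasDerivAt
      (fun t _ => hderiv t) (hcont.intervalIntegrable 0 1)
    simpa using this
  have key : φ (x + v) - φ x - inner ℝ (gradient φ x) v
      = ∫ t in (0:ℝ)..1, (ψ' t - ψ' 0) := by
    rw [intervalIntegral.integral_sub (hcont.intervalIntegrable 0 1)
      (intervalIntegrable_const), hftc]
    simp [hψ']
  rw [key]
  have hbound : ∀ t ∈ Set.uIcc (0:ℝ) 1, ‖ψ' t - ψ' 0‖ ≤ L * ‖v‖ ^ 2 * t := by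
    intro t ht
    rw [Set.uIcc_of_le (by norm_num)] at ht
    have : ‖ψ' t - ψ' 0‖ = |inner ℝ (gradient φ (x + t • v) - gradient φ (x + (0:ℝ) • v)) v| := by
      simp [hψ', inner_sub_left]
    rw [this]
    calc |inner ℝ (gradient φ (x + t • v) - gradient φ (x + (0:ℝ) • v)) v|
        ≤ ‖gradient φ (x + t • v) - gradient φ (x + (0:ℝ) • v)‖ * ‖v‖ :=
          abs_real_inner_le_norm _ _
      _ ≤ (L * ‖x + t • v - (x + (0:ℝ) • v)‖) * ‖v‖ := by
          gcongr; exact hlip _ _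
      _ = L * ‖v‖ ^ 2 * t := by
          have : x + t • v - (x + (0:ℝ) • v) = t • v := by abel_nf; simp
          rw [this, norm_smul]
          simp [abs_of_nonneg ht.1]
          ring
  calc |∫ t in (0:ℝ)..1, (ψ' t - ψ' 0)|
      ≤ |∫ t in (0:ℝ)..1, L * ‖v‖ ^ 2 * t| := by
        rw [← Real.norm_eq_abs]
        apply intervalIntegral.norm_integral_le_abs_of_norm_le
        · filter_upwards [MeasureTheory.ae_restrict_mem measurableSet_uIoc] with t ht
          exact hbound t (Set.uIoc_subset_uIcc ht)
        · exact (by continuity : Continuous fun t : ℝ => L * ‖v‖ ^ 2 * t).intervalIntegrable 0 1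
    _ = L * ‖v‖ ^ 2 / 2 := by
        rw [intervalIntegral.integral_const_mul, integral_id]
        rw [abs_of_nonneg (by positivity)]
        ring

/-- Forward finite difference gradient approximation error bound. -/
theorem ffd_error_bound (n : ℕ) (hn : 0 < n)
    (φ f : EuclideanSpace ℝ (Fin n) → ℝ)
    (L εf σ : ℝ) (hL : 0 ≤ L) (hε : 0 ≤ εf) (hσ : 0 < σ)
    (hφ : ContDiff ℝ 1 φ)
    (hlip : ∀ x y, ‖gradient φ x - gradient φ y‖ ≤ L * ‖x - y‖)
    (hf : ∀ x, |f x - φ x| ≤ εf)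
    (g : EuclideanSpace ℝ (Fin n) → EuclideanSpace ℝ (Fin n))
    (hg : ∀ x i, g x i = (f (x + σ • EuclideanSpace.single i 1) - f x) / σ) :
    ∀ x, ‖g x - gradient φ x‖ ≤ Real.sqrt n * L * σ / 2 + 2 * Real.sqrt n * εf / σ := by
  intro x
  set c : ℝ := L * σ / 2 + 2 * εf / σ with hc_def
  have hc : 0 ≤ c := by positivity
  have hcoord : ∀ i, |g x i - gradient φ x i| ≤ c := by
    intro i
    set v : EuclideanSpace ℝ (Fin n) := σ • EuclideanSpace.single i 1 with hv_def
    have hv : ‖v‖ = σ := by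
      rw [hv_def, norm_smul]
      simp [abs_of_pos hσ]
    have hq := quad_bound φ hφ L hL hlip x v
    rw [hv] at hq
    have hinner : (inner ℝ (gradient φ x) v : ℝ) = σ * gradient φ x i := by
      rw [hv_def, real_inner_smul_right]
      congr 1
      simpa using EuclideanSpace.inner_single_right (𝕜 := ℝ) i 1 (gradient φ x)
    rw [hinner] at hq
    have h1 := abs_sub_le_iff.mp (hf (x + v))
    have h2 := abs_sub_le_iff.mp (hf x)
    have key : |f (x + v) - f x - σ * gradient φ x i| ≤ 2 * εf + L * σ ^ 2 / 2 := by
      have : f (x + v) - f x - σ * gradient φ x i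
          = (f (x + v) - φ (x + v)) + (φ x - f x) + (φ (x + v) - φ x - σ * gradient φ x i) := by
        ring
      rw [this]
      calc |(f (x + v) - φ (x + v)) + (φ x - f x) + (φ (x + v) - φ x - σ * gradient φ x i)|
          ≤ |f (x + v) - φ (x + v)| + |φ x - f x| + |φ (x + v) - φ x - σ * gradient φ x i| :=
            (abs_add_le _ _).trans (by gcongr; exact abs_add_le _ _)
        _ ≤ εf + εf + L * σ ^ 2 / 2 := by
            gcongr
            · exact hf _
            · rw [abs_sub_comm]; exact hf _
        _ = 2 * εf + L * σ ^ 2 / 2 := by ring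
    have : g x i - gradient φ x i = (f (x + v) - f x - σ * gradient φ x i) / σ := by
      rw [hg x i, ← hv_def]
      field_simp
    rw [this, abs_div, abs_of_pos hσ, div_le_iff₀ hσ]
    calc |f (x + v) - f x - σ * gradient φ x i| ≤ 2 * εf + L * σ ^ 2 / 2 := key
      _ = c * σ := by rw [hc_def]; field_simp; ring
  have hnorm : ‖g x - gradient φ x‖ ≤ Real.sqrt n * c := by
    rw [EuclideanSpace.norm_eq]
    have hsum : ∑ i, ‖(g x - gradient φ x) i‖ ^ 2 ≤ n * c ^ 2 := by
      calc ∑ i, ‖(g x - gradient φ x) i‖ ^ 2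
          ≤ ∑ _i : Fin n, c ^ 2 := by
            apply Finset.sum_le_sum
            intro i _
            have : ‖(g x - gradient φ x) i‖ = |g x i - gradient φ x i| := by
              simp [Real.norm_eq_abs]
            rw [this]
            exact pow_le_pow_left₀ (abs_nonneg _) (hcoord i) 2
        _ = n * c ^ 2 := by simp [mul_comm]
    calc Real.sqrt (∑ i, ‖(g x - gradient φ x) i‖ ^ 2)
        ≤ Real.sqrt (n * c ^ 2) := Real.sqrt_le_sqrt hsum
      _ = Real.sqrt n * c := by
          rw [Real.sqrt_mul (Nat.cast_nonneg n), Real.sqrt_sq hc]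
  calc ‖g x - gradient φ x‖ ≤ Real.sqrt n * c := hnorm
    _ = Real.sqrt n * L * σ / 2 + 2 * Real.sqrt n * εf / σ := by rw [hc_def]; ring
end

section
/- Let φ: ℝⁿ → ℝ have L-Lipschitz gradient and f satisfy |f(x) - φ(x)| ≤ ε_f for all x. Let u_1, ..., u_n ∈ ℝⁿ with ‖u_i‖ ≤ 1 for each i, and let Q be the n×n matrix whose rows are the u_i, assumed nonsingular. Define g(x) as the solution of the linear interpolation system σ Q g = F, where F ∈ ℝⁿ has entries F_i = f(x + σ u_i) - f(x). Then ‖g(x) - ∇φ(x)‖ ≤ ‖Q⁻¹‖ (√n L σ / 2 + 2 √n ε_f / σ) for all x, where ‖Q⁻¹‖ denotes the operator 2-norm. -/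
set_option maxHeartbeats 1000000

open InnerProductSpace

open InnerProductSpace

lemma inner_grad {n : ℕ} (φ : EuclideanSpace ℝ (Fin n) → ℝ) (y v : EuclideanSpace ℝ (Fin n)) :
    ⟪gradient φ y, v⟫_ℝ = fderiv ℝ φ y v := by
  rw [gradient, toDual_symm_apply]

lemma hasDerivAt_comp {n : ℕ} (φ : EuclideanSpace ℝ (Fin n) → ℝ) (hφ : ContDiff ℝ 1 φ)
    (x v : EuclideanSpace ℝ (Fin n)) (t : ℝ) :
    HasDerivAt (fun s : ℝ => φ (x + s • v)) ⟪gradient φ (x + t • v), v⟫_ℝ t := by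
  have h1 : HasDerivAt (fun s : ℝ => x + s • v) v t := by
    simpa using ((hasDerivAt_id t).smul_const v).const_add x
  have h2 := (hφ.differentiable one_ne_zero (x + t • v)).hasFDerivAt
  have := h2.comp_hasDerivAt t h1
  rwa [inner_grad]

lemma taylor_bound {n : ℕ} (φ : EuclideanSpace ℝ (Fin n) → ℝ) (L : ℝ) (hL : 0 ≤ L)
    (hφ : ContDiff ℝ 1 φ)
    (hlip : ∀ x y, ‖gradient φ x - gradient φ y‖ ≤ L * ‖x - y‖)
    (x v : EuclideanSpace ℝ (Fin n)) :
    |φ (x + v) - φ x - ⟪gradient φ x, v⟫_ℝ| ≤ L / 2 * ‖v‖ ^ 2 := by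
  set G := gradient φ x with hG
  set A := L / 2 * ‖v‖ ^ 2 with hA
  have key : ∀ (ε : ℝ), ε = 1 ∨ ε = -1 →
      ε * (φ (x + v) - φ x - ⟪G, v⟫_ℝ) ≤ A := by
    intro ε hε
    set h : ℝ → ℝ := fun t => A * t ^ 2 - ε * (φ (x + t • v) - t * ⟪G, v⟫_ℝ) with hh
    have hd : ∀ t : ℝ, HasDerivAt h
        (A * (2 * t) - ε * (⟪gradient φ (x + t • v), v⟫_ℝ - ⟪G, v⟫_ℝ)) t := by
      intro t
      have h1 : HasDerivAt (fun s : ℝ => A * s ^ 2) (A * (2 * t)) t := by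
        simpa using ((hasDerivAt_pow 2 t).const_mul A)
      have h2 : HasDerivAt (fun s : ℝ => φ (x + s • v) - s * ⟪G, v⟫_ℝ)
          (⟪gradient φ (x + t • v), v⟫_ℝ - ⟪G, v⟫_ℝ) t := by
        have := (hasDerivAt_comp φ hφ x v t).sub ((hasDerivAt_id t).mul_const ⟪G, v⟫_ℝ)
        simpa [Pi.sub_def] using this
      exact h1.sub (h2.const_mul ε)
    have hmono : MonotoneOn h (Set.Icc 0 1) := by
      apply monotoneOn_of_deriv_nonneg (convex_Icc 0 1)
        (fun t _ => ((hd t).continuousAt.continuousWithinAt))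
        (fun t _ => ((hd t).differentiableAt.differentiableWithinAt))
      intro t ht
      rw [interior_Icc] at ht
      rw [(hd t).deriv]
      have hip : ε * (⟪gradient φ (x + t • v), v⟫_ℝ - ⟪G, v⟫_ℝ) ≤ L * t * ‖v‖ ^ 2 := by
        have h3 : ⟪gradient φ (x + t • v) - G, v⟫_ℝ = ⟪gradient φ (x + t • v), v⟫_ℝ - ⟪G, v⟫_ℝ :=
          inner_sub_left _ _ _
        have h4 : |⟪gradient φ (x + t • v) - G, v⟫_ℝ| ≤ ‖gradient φ (x + t • v) - G‖ * ‖v‖ :=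
          abs_real_inner_le_norm _ _
        have h5 : ‖gradient φ (x + t • v) - G‖ ≤ L * (t * ‖v‖) := by
          have := hlip (x + t • v) x
          simpa [norm_smul, abs_of_pos ht.1, mul_assoc] using this
        have h6 : ε * (⟪gradient φ (x + t • v), v⟫_ℝ - ⟪G, v⟫_ℝ) ≤
            |⟪gradient φ (x + t • v) - G, v⟫_ℝ| := by
          rw [← h3]
          rcases hε with h | h
          · simpa [h] using le_abs_self ⟪gradient φ (x + t • v) - G, v⟫_ℝ
          · simpa [h] using neg_le_abs ⟪gradient φ (x + t • v) - G, v⟫_ℝ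
        calc ε * _ ≤ |⟪gradient φ (x + t • v) - G, v⟫_ℝ| := h6
          _ ≤ ‖gradient φ (x + t • v) - G‖ * ‖v‖ := h4
          _ ≤ L * (t * ‖v‖) * ‖v‖ := by
              apply mul_le_mul_of_nonneg_right h5 (norm_nonneg v)
          _ = L * t * ‖v‖ ^ 2 := by ring
      have : A * (2 * t) = L * t * ‖v‖ ^ 2 := by rw [hA]; ring
      linarith
    have h10 := hmono (Set.left_mem_Icc.2 zero_le_one) (Set.right_mem_Icc.2 zero_le_one) zero_le_one
    have e0 : x + (0:ℝ) • v = x := by simp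
    have e1 : x + (1:ℝ) • v = x + v := by simp
    have h10' : A * (0:ℝ) ^ 2 - ε * (φ (x + (0:ℝ) • v) - 0 * ⟪G, v⟫_ℝ) ≤
        A * (1:ℝ) ^ 2 - ε * (φ (x + (1:ℝ) • v) - 1 * ⟪G, v⟫_ℝ) := h10
    rw [e0, e1] at h10'
    nlinarith [h10']
  have k1 := key 1 (Or.inl rfl)
  have k2 := key (-1) (Or.inr rfl)
  rw [abs_le]; constructor <;> linarith

/-- Linear interpolation gradient approximation error bound (Theorem 3). -/
theorem interpolation_error_bound (n : ℕ) (hn : 0 < n)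
    (φ f : EuclideanSpace ℝ (Fin n) → ℝ)
    (L εf σ : ℝ) (hL : 0 ≤ L) (hε : 0 ≤ εf) (hσ : 0 < σ)
    (hφ : ContDiff ℝ 1 φ)
    (hlip : ∀ x y, ‖gradient φ x - gradient φ y‖ ≤ L * ‖x - y‖)
    (hf : ∀ x, |f x - φ x| ≤ εf)
    (u : Fin n → EuclideanSpace ℝ (Fin n)) (hu : ∀ i, ‖u i‖ ≤ 1)
    (Q : Matrix (Fin n) (Fin n) ℝ) (hQ : Q = Matrix.of fun i j => u i j)
    (hQinv : IsUnit Q.det)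
    (g : EuclideanSpace ℝ (Fin n) → EuclideanSpace ℝ (Fin n))
    (hg : ∀ x, σ • Q.mulVec (fun j => g x j) = fun i => f (x + σ • u i) - f x) :
    ∀ x, ‖g x - gradient φ x‖ ≤
      ‖LinearMap.toContinuousLinearMap (Matrix.toEuclideanLin Q⁻¹)‖ *
        (Real.sqrt n * L * σ / 2 + 2 * Real.sqrt n * εf / σ) := by
  intro x
  set G := gradient φ x with hG
  set C : ℝ := L * σ / 2 + 2 * εf / σ with hC
  have hC0 : 0 ≤ C := by positivity
  set w : Fin n → ℝ := fun i => (f (x + σ • u i) - f x) / σ - ⟪u i, G⟫_ℝ with hw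
  -- entrywise bound
  have hwb : ∀ i, |w i| ≤ C := by
    intro i
    have ht := taylor_bound φ L hL hφ hlip x (σ • u i)
    have h1 := hf (x + σ • u i)
    have h2 := hf x
    have hip : ⟪G, σ • u i⟫_ℝ = σ * ⟪u i, G⟫_ℝ := by
      rw [real_inner_smul_right, real_inner_comm]
    have hnu : ‖σ • u i‖ ^ 2 ≤ σ ^ 2 := by
      rw [norm_smul]
      have : ‖u i‖ ≤ 1 := hu i
      have h0 : (0:ℝ) ≤ ‖u i‖ := norm_nonneg _
      simp only [Real.norm_eq_abs, abs_of_pos hσ]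
      have h1 : ‖u i‖ ^ 2 ≤ 1 := by nlinarith
      nlinarith [mul_nonneg (sq_nonneg σ) (by nlinarith : (0:ℝ) ≤ 1 - ‖u i‖ ^ 2)]
    have key : |f (x + σ • u i) - f x - σ * ⟪u i, G⟫_ℝ| ≤ L / 2 * σ ^ 2 + 2 * εf := by
      have habs : |f (x + σ • u i) - f x - σ * ⟪u i, G⟫_ℝ -
          (φ (x + σ • u i) - φ x - ⟪G, σ • u i⟫_ℝ)| ≤ 2 * εf := by
        rw [hip]
        calc |f (x + σ • u i) - f x - σ * ⟪u i, G⟫_ℝ - (φ (x + σ • u i) - φ x - σ * ⟪u i, G⟫_ℝ)|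
            = |(f (x + σ • u i) - φ (x + σ • u i)) - (f x - φ x)| := by ring_nf
          _ ≤ |f (x + σ • u i) - φ (x + σ • u i)| + |f x - φ x| := abs_sub _ _
          _ ≤ 2 * εf := by linarith
      have ht' : |φ (x + σ • u i) - φ x - ⟪G, σ • u i⟫_ℝ| ≤ L / 2 * σ ^ 2 := by
        calc |φ (x + σ • u i) - φ x - ⟪G, σ • u i⟫_ℝ| ≤ L / 2 * ‖σ • u i‖ ^ 2 := ht
          _ ≤ L / 2 * σ ^ 2 := by nlinarith
      calc |f (x + σ • u i) - f x - σ * ⟪u i, G⟫_ℝ|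
          = |(f (x + σ • u i) - f x - σ * ⟪u i, G⟫_ℝ -
            (φ (x + σ • u i) - φ x - ⟪G, σ • u i⟫_ℝ)) +
            (φ (x + σ • u i) - φ x - ⟪G, σ • u i⟫_ℝ)| := by rw [sub_add_cancel]
        _ ≤ |f (x + σ • u i) - f x - σ * ⟪u i, G⟫_ℝ -
            (φ (x + σ • u i) - φ x - ⟪G, σ • u i⟫_ℝ)| +
            |φ (x + σ • u i) - φ x - ⟪G, σ • u i⟫_ℝ| := abs_add_le _ _
        _ ≤ 2 * εf + L / 2 * σ ^ 2 := add_le_add habs ht'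
        _ = L / 2 * σ ^ 2 + 2 * εf := by ring
    have : w i = (f (x + σ • u i) - f x - σ * ⟪u i, G⟫_ℝ) / σ := by
      rw [hw]; field_simp
    rw [this, abs_div, abs_of_pos hσ, div_le_iff₀ hσ]
    calc |f (x + σ • u i) - f x - σ * ⟪u i, G⟫_ℝ| ≤ L / 2 * σ ^ 2 + 2 * εf := key
      _ = C * σ := by rw [hC]; field_simp
  -- identity: g x - G = toEuclideanLin Q⁻¹ applied to w
  have hQmul : Q.mulVec (fun j => g x j - G j) = w := by
    have h1 : Q.mulVec (fun j => g x j) = fun i => (f (x + σ • u i) - f x) / σ := by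
      have := hg x
      funext i
      have := congrFun this i
      simp only [Pi.smul_apply, smul_eq_mul] at this
      field_simp
      linarith [this]
    have h2 : Q.mulVec (fun j => G j) = fun i => ⟪u i, G⟫_ℝ := by
      funext i
      simp only [Matrix.mulVec, dotProduct, hQ, Matrix.of_apply]
      rw [PiLp.inner_apply]
      simp [RCLike.inner_apply, mul_comm]
    have h3 : (fun j => g x j - G j) = (fun j => g x j) - (fun j => G j) := rfl
    rw [h3, Matrix.mulVec_sub, h1, h2]
    funext i
    simp [hw]
  have hid : g x - G = (WithLp.equiv 2 (Fin n → ℝ)).symm (Q⁻¹.mulVec w) := by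
    have := congrArg (Q⁻¹.mulVec) hQmul
    rw [Matrix.mulVec_mulVec, Matrix.nonsing_inv_mul Q hQinv, Matrix.one_mulVec] at this
    ext j
    have := congrFun this j
    simp only [WithLp.equiv_symm_apply, PiLp.toLp_apply, PiLp.sub_apply]
    exact this ▸ rfl
  set M := LinearMap.toContinuousLinearMap (Matrix.toEuclideanLin Q⁻¹) with hM
  set w' : EuclideanSpace ℝ (Fin n) := (WithLp.equiv 2 (Fin n → ℝ)).symm w with hw'
  have hMw : g x - G = M w' := by
    rw [hid, hM, hw']
    simp [WithLp.equiv_symm_apply, Matrix.toEuclideanLin_apply_piLp_toLp]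
  have hwnorm : ‖w'‖ ≤ Real.sqrt n * C := by
    have : ‖w'‖ = Real.sqrt (∑ i, ‖w i‖ ^ 2) := by
      rw [EuclideanSpace.norm_eq]
      congr 1
    rw [this]
    have hsum : ∑ i : Fin n, ‖w i‖ ^ 2 ≤ n * C ^ 2 := by
      calc ∑ i : Fin n, ‖w i‖ ^ 2 ≤ ∑ _i : Fin n, C ^ 2 := by
            apply Finset.sum_le_sum
            intro i _
            have := hwb i
            rw [Real.norm_eq_abs]
            nlinarith [abs_nonneg (w i)]
        _ = n * C ^ 2 := by simp [mul_comm]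
    calc Real.sqrt (∑ i, ‖w i‖ ^ 2) ≤ Real.sqrt (n * C ^ 2) := Real.sqrt_le_sqrt hsum
      _ = Real.sqrt n * C := by
          rw [Real.sqrt_mul (Nat.cast_nonneg n), Real.sqrt_sq hC0]
  calc ‖g x - G‖ = ‖M w'‖ := by rw [hMw]
    _ ≤ ‖M‖ * ‖w'‖ := M.le_opNorm w'
    _ ≤ ‖M‖ * (Real.sqrt n * C) := by
        exact mul_le_mul_of_nonneg_left hwnorm (norm_nonneg M)
    _ = ‖M‖ * (Real.sqrt n * L * σ / 2 + 2 * Real.sqrt n * εf / σ) := by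
        rw [hC]; ring
end

section
/- Let φ: ℝⁿ → ℝ have L-Lipschitz gradient, f satisfy |f - φ| ≤ ε_f, and let u_1, ..., u_n with ‖u_i‖ ≤ 1 give a nonsingular interpolation matrix Q. If the interpolation gradient g(x) is computed with sampling radius σ satisfying 2√(ε_f/L) ≤ σ ≤ θ‖∇φ(x)‖/(‖Q⁻¹‖ √n L), then ‖g(x) - ∇φ(x)‖ ≤ θ ‖∇φ(x)‖. -/
open Set in
lemma taylor_aux {n : ℕ} (φ : EuclideanSpace ℝ (Fin n) → ℝ) (L : ℝ)
    (hφ : ContDiff ℝ 1 φ)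
    (hlip : ∀ x y, ‖gradient φ x - gradient φ y‖ ≤ L * ‖x - y‖)
    (x v : EuclideanSpace ℝ (Fin n)) :
    |φ (x + v) - φ x - inner ℝ (gradient φ x) v| ≤ L / 2 * ‖v‖ ^ 2 := by
  have hdiff : Differentiable ℝ φ := hφ.differentiable one_ne_zero
  have key : ∀ z (w : EuclideanSpace ℝ (Fin n)),
      fderiv ℝ φ z w = (inner ℝ (gradient φ z) w : ℝ) := by
    intro z w
    rw [gradient, InnerProductSpace.toDual_symm_apply]
  set h : ℝ → ℝ := fun t => φ (x + t • v) - φ x - t * inner ℝ (gradient φ x) v with hh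
  have hderiv : ∀ t : ℝ, HasDerivAt h
      ((inner ℝ (gradient φ (x + t • v)) v : ℝ) - inner ℝ (gradient φ x) v) t := by
    intro t
    have hc : HasDerivAt (fun t : ℝ => x + t • v) v t := by
      simpa using ((hasDerivAt_id t).smul_const v).const_add x
    have h1 : HasDerivAt (fun t : ℝ => φ (x + t • v)) (fderiv ℝ φ (x + t • v) v) t :=
      (hdiff _).hasFDerivAt.comp_hasDerivAt t hc
    rw [key] at h1
    exact (h1.sub_const (φ x)).sub
      (hasDerivAt_mul_const (inner ℝ (gradient φ x) v : ℝ))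
  have main : ∀ t ∈ Icc (0:ℝ) 1, ‖h t‖ ≤ L * ‖v‖ ^ 2 * t ^ 2 / 2 := by
    refine image_norm_le_of_norm_deriv_right_le_deriv_boundary
      (f' := fun t => (inner ℝ (gradient φ (x + t • v)) v : ℝ) - inner ℝ (gradient φ x) v)
      (B := fun t => L * ‖v‖ ^ 2 * t ^ 2 / 2)
      (B' := fun t => L * ‖v‖ ^ 2 * t)
      (fun t _ => (hderiv t).continuousAt.continuousWithinAt)
      (fun t _ => (hderiv t).hasDerivWithinAt)
      (by simp [hh]) (fun t => ?_) (fun t ht => ?_)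
    · have h2 := ((hasDerivAt_pow 2 t).const_mul (L * ‖v‖ ^ 2)).div_const 2
      refine h2.congr_deriv ?_
      rw [show (2:ℕ) - 1 = 1 from rfl]; push_cast; ring
    · have h1 : (inner ℝ (gradient φ (x + t • v)) v : ℝ) - inner ℝ (gradient φ x) v
          = inner ℝ (gradient φ (x + t • v) - gradient φ x) v := by
        rw [inner_sub_left]
      show |(inner ℝ (gradient φ (x + t • v)) v : ℝ) - inner ℝ (gradient φ x) v| ≤ L * ‖v‖ ^ 2 * t
      rw [h1]
      calc |(inner ℝ (gradient φ (x + t • v) - gradient φ x) v : ℝ)|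
          ≤ ‖gradient φ (x + t • v) - gradient φ x‖ * ‖v‖ := abs_real_inner_le_norm _ _
        _ ≤ (L * ‖(x + t • v) - x‖) * ‖v‖ :=
            mul_le_mul_of_nonneg_right (hlip _ _) (norm_nonneg _)
        _ = L * ‖v‖ ^ 2 * t := by
            rw [add_sub_cancel_left, norm_smul, Real.norm_eq_abs, abs_of_nonneg ht.1]
            ring
  have h2 := main 1 (by norm_num)
  simp only [hh, Real.norm_eq_abs, one_smul, one_pow, mul_one, one_mul] at h2
  calc |φ (x + v) - φ x - inner ℝ (gradient φ x) v| ≤ L * ‖v‖ ^ 2 / 2 := h2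
    _ = L / 2 * ‖v‖ ^ 2 := by ring

set_option maxHeartbeats 1000000 in
/-- If the sampling radius σ for linear interpolation lies in the prescribed interval,
the interpolation gradient satisfies the norm condition ‖g(x) - ∇φ(x)‖ ≤ θ‖∇φ(x)‖. -/
theorem interpolation_norm_condition (n : ℕ) (hn : 0 < n)
    (φ f : EuclideanSpace ℝ (Fin n) → ℝ)
    (L εf σ θ : ℝ) (hL : 0 < L) (hε : 0 ≤ εf) (hσ : 0 < σ) (hθ0 : 0 ≤ θ) (hθ1 : θ < 1)
    (hφ : ContDiff ℝ 1 φ)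
    (hlip : ∀ x y, ‖gradient φ x - gradient φ y‖ ≤ L * ‖x - y‖)
    (hf : ∀ x, |f x - φ x| ≤ εf)
    (u : Fin n → EuclideanSpace ℝ (Fin n)) (hu : ∀ i, ‖u i‖ ≤ 1)
    (Q : Matrix (Fin n) (Fin n) ℝ) (hQ : Q = Matrix.of fun i j => u i j)
    (hQinv : IsUnit Q.det)
    (g : EuclideanSpace ℝ (Fin n) → EuclideanSpace ℝ (Fin n))
    (hg : ∀ x, σ • Q.mulVec (fun j => g x j) = fun i => f (x + σ • u i) - f x)
    (x : EuclideanSpace ℝ (Fin n))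
    (hσlo : 2 * Real.sqrt (εf / L) ≤ σ)
    (hσhi : σ ≤ θ * ‖gradient φ x‖ /
      (‖LinearMap.toContinuousLinearMap (Matrix.toEuclideanLin Q⁻¹)‖ * Real.sqrt n * L)) :
    ‖g x - gradient φ x‖ ≤ θ * ‖gradient φ x‖ := by
  set G := gradient φ x with hG
  set K := ‖LinearMap.toContinuousLinearMap (Matrix.toEuclideanLin Q⁻¹)‖ with hK
  set M : ℝ := L * σ ^ 2 / 2 + 2 * εf with hM
  -- the error terms
  set e : Fin n → ℝ := fun i => f (x + σ • u i) - f x - σ * inner ℝ G (u i) with he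
  have hebound : ∀ i, |e i| ≤ M := by
    intro i
    have ht := taylor_aux φ L hφ hlip x (σ • u i)
    have h1 := hf (x + σ • u i)
    have h2 := hf x
    have hin : (inner ℝ G (σ • u i) : ℝ) = σ * inner ℝ G (u i) := real_inner_smul_right _ _ _
    have hnv : ‖σ • u i‖ ≤ σ := by
      rw [norm_smul, Real.norm_eq_abs, abs_of_pos hσ]
      nlinarith [hu i, norm_nonneg (u i)]
    have hnv2 : L / 2 * ‖σ • u i‖ ^ 2 ≤ L / 2 * σ ^ 2 := by
      apply mul_le_mul_of_nonneg_left _ (by positivity)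
      exact pow_le_pow_left₀ (norm_nonneg _) hnv 2
    rw [hin] at ht
    have : e i = (φ (x + σ • u i) - φ x - σ * inner ℝ G (u i))
        + (f (x + σ • u i) - φ (x + σ • u i)) - (f x - φ x) := by
      simp [he]; ring
    rw [this, hM]
    calc |φ (x + σ • u i) - φ x - σ * inner ℝ G (u i)
          + (f (x + σ • u i) - φ (x + σ • u i)) - (f x - φ x)|
        ≤ |φ (x + σ • u i) - φ x - σ * inner ℝ G (u i)|
          + |f (x + σ • u i) - φ (x + σ • u i)| + |f x - φ x| := by
          exact (abs_sub _ _).trans (add_le_add_left (abs_add_le _ _) _)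
      _ ≤ L / 2 * σ ^ 2 + εf + εf := by
          gcongr
          exact ht.trans hnv2
      _ ≤ L * σ ^ 2 / 2 + 2 * εf := by ring_nf; linarith
  -- w = g x - G componentwise; Q · w = σ⁻¹ e
  set w : Fin n → ℝ := fun j => g x j - G j with hw
  have hQw : Q.mulVec w = fun i => σ⁻¹ * e i := by
    funext i
    have h1 := congrFun (hg x) i
    simp only [Pi.smul_apply, smul_eq_mul] at h1
    have hQG : Q.mulVec (fun j => G j) i = inner ℝ G (u i) := by
      simp [Matrix.mulVec, dotProduct, hQ, PiLp.inner_apply, RCLike.inner_apply,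
        conj_trivial]
    have hsub : Q.mulVec w i = Q.mulVec (fun j => g x j) i - Q.mulVec (fun j => G j) i := by
      have : w = (fun j => g x j) - fun j => G j := by funext j; simp [hw]
      rw [this, Matrix.mulVec_sub, Pi.sub_apply]
    rw [hsub, hQG]
    field_simp [he]
    linarith [h1]
  have hwQ : w = Q⁻¹.mulVec (Q.mulVec w) := by
    rw [Matrix.mulVec_mulVec, Matrix.nonsing_inv_mul Q hQinv, Matrix.one_mulVec]
  -- Euclidean vectors
  set E : EuclideanSpace ℝ (Fin n) := (WithLp.equiv 2 (Fin n → ℝ)).symm (Q.mulVec w) with hE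
  have hgx : g x - G = Matrix.toEuclideanLin Q⁻¹ E := by
    rw [hE, WithLp.equiv_symm_apply, Matrix.toEuclideanLin_apply_piLp_toLp, ← hwQ]
    ext j
    simp [hw]
  have hnormE : ‖E‖ ≤ Real.sqrt n * (σ⁻¹ * M) := by
    have hM0 : 0 ≤ M := by positivity
    have hcomp : ∀ i, ‖E i‖ ^ 2 ≤ (σ⁻¹ * M) ^ 2 := by
      intro i
      have : E i = σ⁻¹ * e i := by rw [hE]; exact congrFun hQw i
      rw [this, Real.norm_eq_abs]
      have h1 : |σ⁻¹ * e i| ≤ σ⁻¹ * M := by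
        rw [abs_mul, abs_of_pos (inv_pos.mpr hσ)]
        exact mul_le_mul_of_nonneg_left (hebound i) (by positivity)
      have h2 : 0 ≤ |σ⁻¹ * e i| := abs_nonneg _
      nlinarith
    rw [EuclideanSpace.norm_eq]
    have : ∑ i, ‖E i‖ ^ 2 ≤ n * (σ⁻¹ * M) ^ 2 := by
      calc ∑ i, ‖E i‖ ^ 2 ≤ ∑ _i : Fin n, (σ⁻¹ * M) ^ 2 :=
            Finset.sum_le_sum fun i _ => hcomp i
        _ = n * (σ⁻¹ * M) ^ 2 := by simp [mul_comm]
    calc Real.sqrt (∑ i, ‖E i‖ ^ 2) ≤ Real.sqrt (n * (σ⁻¹ * M) ^ 2) :=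
          Real.sqrt_le_sqrt this
      _ = Real.sqrt n * (σ⁻¹ * M) := by
          rw [Real.sqrt_mul (by positivity), Real.sqrt_sq (by positivity)]
  -- operator norm bound
  have hopnorm : ‖g x - G‖ ≤ K * ‖E‖ := by
    rw [hgx]
    have : Matrix.toEuclideanLin Q⁻¹ E
        = LinearMap.toContinuousLinearMap (Matrix.toEuclideanLin Q⁻¹) E := rfl
    rw [this]
    exact (LinearMap.toContinuousLinearMap (Matrix.toEuclideanLin Q⁻¹)).le_opNorm E
  -- arithmetic
  have hK0 : 0 ≤ K := norm_nonneg _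
  have hsn : (0:ℝ) ≤ Real.sqrt n := Real.sqrt_nonneg _
  have hden : 0 < K * Real.sqrt n * L := by
    rcases (mul_nonneg (mul_nonneg hK0 hsn) hL.le).lt_or_eq with h | h
    · exact h
    · exfalso
      rw [← h, div_zero] at hσhi
      linarith
  have hσK : σ * (K * Real.sqrt n * L) ≤ θ * ‖G‖ := (le_div_iff₀ hden).mp hσhi
  have hεσ : εf ≤ L * σ ^ 2 / 4 := by
    have h1 : (2 * Real.sqrt (εf / L)) ^ 2 ≤ σ ^ 2 :=
      pow_le_pow_left₀ (by positivity) hσlo 2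
    have h2 : Real.sqrt (εf / L) ^ 2 = εf / L := Real.sq_sqrt (by positivity)
    have h3 : 4 * (εf / L) ≤ σ ^ 2 := by nlinarith
    have h4 : εf / L ≤ σ ^ 2 / 4 := by linarith
    calc εf = (εf / L) * L := by field_simp
      _ ≤ σ ^ 2 / 4 * L := mul_le_mul_of_nonneg_right h4 hL.le
      _ = L * σ ^ 2 / 4 := by ring
  have hMσ : σ⁻¹ * M ≤ L * σ := by
    rw [hM]
    have : σ⁻¹ * (L * σ ^ 2 / 2 + 2 * εf) = L * σ / 2 + 2 * εf / σ := by
      field_simp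
    rw [this]
    have h4 : 2 * εf / σ ≤ L * σ / 2 := by
      rw [div_le_div_iff₀ hσ (by norm_num : (0:ℝ) < 2)]
      nlinarith
    linarith
  calc ‖g x - G‖ ≤ K * ‖E‖ := hopnorm
    _ ≤ K * (Real.sqrt n * (σ⁻¹ * M)) := mul_le_mul_of_nonneg_left hnormE hK0
    _ ≤ K * (Real.sqrt n * (L * σ)) := by
        apply mul_le_mul_of_nonneg_left _ hK0
        exact mul_le_mul_of_nonneg_left hMσ hsn
    _ = σ * (K * Real.sqrt n * L) := by ring
    _ ≤ θ * ‖G‖ := hσK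
end

section
/- Suppose θ ∈ (0,1), M > 0, ε_f ≥ 0, n a positive integer. If σ > 0 satisfies (6ε_f/M)^{1/3} ≤ σ ≤ √(3θ‖∇φ(x)‖/(√n M)) and ‖g(x) - ∇φ(x)‖ ≤ √n M σ²/6 + √n ε_f/σ, then ‖g(x) - ∇φ(x)‖ ≤ θ‖∇φ(x)‖. The interval for σ is nonempty whenever ‖∇φ(x)‖ ≥ (2/6^{1/3}) √n (M ε_f²)^{1/3}/θ. -/
/-- Sufficient condition on the central finite difference interval σ guaranteeing the
norm condition, together with nonemptiness of the interval for σ. -/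
theorem cfd_sigma_interval (n : ℕ) (hn : 0 < n)
    (M εf σ θ : ℝ) (hM : 0 < M) (hε : 0 ≤ εf) (hσ : 0 < σ) (hθ0 : 0 < θ) (hθ1 : θ < 1)
    (g gradφ : EuclideanSpace ℝ (Fin n)) :
    (((6 * εf / M) ^ ((1:ℝ)/3) ≤ σ ∧ σ ≤ Real.sqrt (3 * θ * ‖gradφ‖ / (Real.sqrt n * M)) ∧
        ‖g - gradφ‖ ≤ Real.sqrt n * M * σ ^ 2 / 6 + Real.sqrt n * εf / σ) →
      ‖g - gradφ‖ ≤ θ * ‖gradφ‖) ∧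
    (‖gradφ‖ ≥ 2 / (6:ℝ) ^ ((1:ℝ)/3) * (Real.sqrt n * (M * εf ^ 2) ^ ((1:ℝ)/3) / θ) →
      (6 * εf / M) ^ ((1:ℝ)/3) ≤ Real.sqrt (3 * θ * ‖gradφ‖ / (Real.sqrt n * M))) := by
  have hs : (0:ℝ) < Real.sqrt n := Real.sqrt_pos.mpr (by exact_mod_cast hn)
  have hq : (0:ℝ) ≤ 6 * εf / M := by positivity
  constructor
  · rintro ⟨h1, h2, h3⟩
    have hcube : 6 * εf / M ≤ σ ^ 3 := by
      have h := pow_le_pow_left₀ (Real.rpow_nonneg hq _) h1 3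
      rw [← Real.rpow_natCast ((6 * εf / M) ^ ((1:ℝ)/3)) 3, ← Real.rpow_mul hq] at h
      norm_num at h
      exact h
    have h6ε : 6 * εf ≤ σ ^ 3 * M := (div_le_iff₀ hM).mp hcube
    have hsq : σ ^ 2 ≤ 3 * θ * ‖gradφ‖ / (Real.sqrt n * M) := (Real.le_sqrt' hσ).mp h2
    have hsq' : σ ^ 2 * (Real.sqrt n * M) ≤ 3 * θ * ‖gradφ‖ :=
      (le_div_iff₀ (by positivity)).mp hsq
    have h4 : Real.sqrt n * εf / σ ≤ Real.sqrt n * M * σ ^ 2 / 6 := by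
      rw [div_le_div_iff₀ hσ (by norm_num)]
      nlinarith [hs.le, hσ.le, h6ε]
    nlinarith [h3, h4, hsq']
  · intro hG
    set X := (M * εf ^ 2) ^ ((1:ℝ)/3) with hX
    have hXpos : 0 ≤ X := Real.rpow_nonneg (by positivity) _
    rw [show ((1:ℝ)/3) = (1:ℝ)/3 from rfl, Real.le_sqrt (Real.rpow_nonneg hq _) (by positivity),
      le_div_iff₀ (by positivity)]
    have hA2 : ((6 * εf / M) ^ ((1:ℝ)/3)) ^ 2 = (6 * εf / M) ^ ((2:ℝ)/3) := by
      rw [← Real.rpow_natCast ((6 * εf / M) ^ ((1:ℝ)/3)) 2, ← Real.rpow_mul hq]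
      norm_num
    have key : (6 * εf / M) ^ ((2:ℝ)/3) * M = (6:ℝ) ^ ((2:ℝ)/3) * X := by
      rw [hX, Real.div_rpow (by positivity) hM.le, Real.mul_rpow (by norm_num) hε,
        Real.mul_rpow hM.le (by positivity)]
      have e1 : (εf ^ 2) ^ ((1:ℝ)/3) = εf ^ ((2:ℝ)/3) := by
        rw [← Real.rpow_natCast εf 2, ← Real.rpow_mul hε]
        norm_num
      have e2 : M ^ ((1:ℝ)/3) * M ^ ((2:ℝ)/3) = M := by
        rw [← Real.rpow_add hM]
        norm_num
      rw [e1]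
      nth_rewrite 2 [← e2]
      have hM23 : (0:ℝ) < M ^ ((2:ℝ)/3) := Real.rpow_pos_of_pos hM _
      field_simp
    have h62 : (6:ℝ) ^ ((2:ℝ)/3) = 6 / (6:ℝ) ^ ((1:ℝ)/3) := by
      rw [eq_div_iff (by positivity), ← Real.rpow_add (by norm_num)]
      norm_num
    have key2 : (6 * εf / M) ^ ((2:ℝ)/3) * (Real.sqrt n * M)
        = (6:ℝ) ^ ((2:ℝ)/3) * X * Real.sqrt n := by
      linear_combination Real.sqrt n * key
    have hGθ : 2 / (6:ℝ) ^ ((1:ℝ)/3) * (Real.sqrt n * X) ≤ θ * ‖gradφ‖ := by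
      have h := mul_le_mul_of_nonneg_left hG hθ0.le
      calc 2 / (6:ℝ) ^ ((1:ℝ)/3) * (Real.sqrt n * X)
          = θ * (2 / (6:ℝ) ^ ((1:ℝ)/3) * (Real.sqrt n * X / θ)) := by
            field_simp
          _ ≤ θ * ‖gradφ‖ := h
    rw [hA2, key2, h62]
    have h613 : (0:ℝ) < (6:ℝ) ^ ((1:ℝ)/3) := Real.rpow_pos_of_pos (by norm_num) _
    rw [div_mul_eq_mul_div, div_mul_eq_mul_div, div_le_iff₀ h613]
    rw [div_mul_eq_mul_div, div_le_iff₀ h613] at hGθ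
    nlinarith [hGθ]
end
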